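/- arXiv:1607.06176 — 2 statements merged into one kernel-verified Lean document; each statement's English description precedes it below -/
import Mathlib

section
/- Let f be an FIF on SG with vertical scaling factors d₁,d₂,d₃ ∈ (−1,1). Then for every integer m ≥ 1, E_m(f) = (5/3)(d₁² + d₂² + d₃²)·(E_{m−1}(f) − E₀(f)) + E₁(f). -/
open Finset Filter

noncomputable section

/-- Points in the plane. -/
abbrev Pt := Fin 2 → ℝ

/-- The three contraction maps `P_i(x) = (x + q_i)/2`. -/
def Pmap (q : Fin 3 → Pt) (i : Fin 3) (x : Pt) : Pt := (x + q i) / 2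

/-- `Pw q m ω = P_{ω 0} ∘ P_{ω 1} ∘ ⋯ ∘ P_{ω (m-1)}` for a word `ω` of length `m`. -/
def Pw (q : Fin 3 → Pt) : (m : ℕ) → (Fin m → Fin 3) → Pt → Pt
  | 0, _, x => x
  | m + 1, ω, x => Pmap q (ω 0) (Pw q m (fun k => ω k.succ) x)

/-- The level-`m` vertex set `V_m`. -/
def V (q : Fin 3 → Pt) (m : ℕ) : Set Pt :=
  {x | ∃ ω : Fin m → Fin 3, ∃ i : Fin 3, x = Pw q m ω (q i)}

/-- `V_* = ⋃ m, V_m`. -/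
def Vstar (q : Fin 3 → Pt) : Set Pt := ⋃ m, V q m

/-- The Sierpinski gasket, as the closure of `V_*`. -/
def SG (q : Fin 3 → Pt) : Set Pt := closure (Vstar q)

/-- The level-`m` graph energy. -/
def energy (q : Fin 3 → Pt) (m : ℕ) (u : Pt → ℝ) : ℝ :=
  (5/3 : ℝ)^m * ∑ ω : Fin m → Fin 3,
    ∑ p ∈ Finset.univ.filter (fun p : Fin 3 × Fin 3 => p.1 < p.2),
      (u (Pw q m ω (q p.1)) - u (Pw q m ω (q p.2)))^2

/-- The level-`m` bilinear graph energy. -/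
def energyBil (q : Fin 3 → Pt) (m : ℕ) (u v : Pt → ℝ) : ℝ :=
  (5/3 : ℝ)^m * ∑ ω : Fin m → Fin 3,
    ∑ p ∈ Finset.univ.filter (fun p : Fin 3 × Fin 3 => p.1 < p.2),
      (u (Pw q m ω (q p.1)) - u (Pw q m ω (q p.2))) *
        (v (Pw q m ω (q p.1)) - v (Pw q m ω (q p.2)))

open scoped Classical in
/-- The level-`m` graph Laplacian at `x`. -/
def graphLap (q : Fin 3 → Pt) (m : ℕ) (u : Pt → ℝ) (x : Pt) : ℝ :=
  ∑ ω : Fin m → Fin 3,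
    ∑ p ∈ Finset.univ.filter (fun p : Fin 3 × Fin 3 => p.1 ≠ p.2 ∧ Pw q m ω (q p.1) = x),
      (u (Pw q m ω (q p.2)) - u x)

/-- A function is harmonic on `SG` if it is continuous on `SG` and satisfies
the `1/5-2/5` rule. -/
def IsHarmonic (q : Fin 3 → Pt) (h : Pt → ℝ) : Prop :=
  ContinuousOn h (SG q) ∧
  ∀ (m : ℕ) (ω : Fin m → Fin 3) (i j k : Fin 3), i ≠ j → j ≠ k → i ≠ k →
    h (Pw q m ω (Pmap q i (q j))) =
      2/5 * h (Pw q m ω (q i)) + 2/5 * h (Pw q m ω (q j)) + 1/5 * h (Pw q m ω (q k))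

/-- `f` is a fractal interpolation function on `SG` with vertical scaling factors `d i`. -/
def IsFIF (q : Fin 3 → Pt) (d : Fin 3 → ℝ) (f : Pt → ℝ) : Prop :=
  ContinuousOn f (SG q) ∧
  ∃ h : Fin 3 → Pt → ℝ, (∀ i, IsHarmonic q (h i)) ∧
    ∀ i, ∀ x ∈ SG q, f (Pmap q i x) = d i * f x + h i x



/-! ### Auxiliary lemmas -/

/-- The set of ordered pairs used in the energy sums. -/
lemma pairSum (g : Fin 3 × Fin 3 → ℝ) :
    ∑ p ∈ Finset.univ.filter (fun p : Fin 3 × Fin 3 => p.1 < p.2), g p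
      = g (0,1) + g (0,2) + g (1,2) := by
  rw [show Finset.univ.filter (fun p : Fin 3 × Fin 3 => p.1 < p.2)
      = {(0,1),(0,2),(1,2)} from by decide]
  rw [Finset.sum_insert (by decide), Finset.sum_insert (by decide), Finset.sum_singleton]
  ring

lemma pmap_self (q : Fin 3 → Pt) (i : Fin 3) : Pmap q i (q i) = q i := by
  funext k; simp only [Pmap, Pi.div_apply, Pi.add_apply, Pi.ofNat_apply]; ring

lemma pmap_comm (q : Fin 3 → Pt) (i j : Fin 3) : Pmap q i (q j) = Pmap q j (q i) := by
  funext k; simp only [Pmap, Pi.div_apply, Pi.add_apply]; ring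

lemma pw_succ (q : Fin 3 → Pt) (n : ℕ) (ω : Fin (n+1) → Fin 3) (x : Pt) :
    Pw q (n+1) ω x = Pmap q (ω 0) (Pw q n (fun k => ω k.succ) x) := rfl

lemma pw_zero (q : Fin 3 → Pt) (ω : Fin 0 → Fin 3) (x : Pt) : Pw q 0 ω x = x := rfl

lemma pw_cons (q : Fin 3 → Pt) (n : ℕ) (i : Fin 3) (ω : Fin n → Fin 3) (x : Pt) :
    Pw q (n+1) (Fin.cons i ω) x = Pmap q i (Pw q n ω x) := by
  rw [pw_succ]
  simp only [Fin.cons_zero, Fin.cons_succ]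

lemma mem_SG (q : Fin 3 → Pt) (n : ℕ) (ω : Fin n → Fin 3) (i : Fin 3) :
    Pw q n ω (q i) ∈ SG q :=
  subset_closure (Set.mem_iUnion.2 ⟨n, ω, i, rfl⟩)

/-- The equivalence `(i, ω) ↦ i ⬝ ω` between `Fin 3 × (Fin n → Fin 3)` and words of
length `n+1`. -/
def consEquiv (n : ℕ) : Fin 3 × (Fin n → Fin 3) ≃ (Fin (n+1) → Fin 3) where
  toFun p := Fin.cons p.1 p.2
  invFun ω := (ω 0, fun k => ω k.succ)
  left_inv := by
    rintro ⟨i, ω⟩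
    simp only [Fin.cons_zero, Fin.cons_succ]
  right_inv := fun ω => Fin.cons_self_tail ω

/-- Decomposition of an energy-type sum according to the first letter of the word. -/
lemma sum_cons (q : Fin 3 → Pt) (G : Pt → Pt → ℝ) (n : ℕ) :
    (∑ ω : Fin (n+1) → Fin 3,
      ∑ p ∈ Finset.univ.filter (fun p : Fin 3 × Fin 3 => p.1 < p.2),
        G (Pw q (n+1) ω (q p.1)) (Pw q (n+1) ω (q p.2)))
    = ∑ i : Fin 3, ∑ ω : Fin n → Fin 3,
        ∑ p ∈ Finset.univ.filter (fun p : Fin 3 × Fin 3 => p.1 < p.2),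
          G (Pmap q i (Pw q n ω (q p.1))) (Pmap q i (Pw q n ω (q p.2))) := by
  rw [← Equiv.sum_comp (consEquiv n)
    (fun ω => ∑ p ∈ Finset.univ.filter (fun p : Fin 3 × Fin 3 => p.1 < p.2),
        G (Pw q (n+1) ω (q p.1)) (Pw q (n+1) ω (q p.2))), Fintype.sum_prod_type]
  refine Finset.sum_congr rfl fun i _ => Finset.sum_congr rfl fun ω _ =>
    Finset.sum_congr rfl fun p _ => ?_
  simp only [consEquiv, Equiv.coe_fn_mk, pw_cons]
  exact congrArg₂ G (pw_cons q n i ω _) (pw_cons q n i ω _)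

lemma energy_cons (q : Fin 3 → Pt) (u : Pt → ℝ) (n : ℕ) :
    energy q (n+1) u = (5/3) * ∑ i : Fin 3, energy q n (fun x => u (Pmap q i x)) := by
  unfold energy
  rw [sum_cons q (fun x y => (u x - u y)^2) n, Finset.mul_sum, Finset.mul_sum]
  exact Finset.sum_congr rfl fun i _ => by ring

lemma energyBil_cons (q : Fin 3 → Pt) (u v : Pt → ℝ) (n : ℕ) :
    energyBil q (n+1) u v
      = (5/3) * ∑ i : Fin 3,
          energyBil q n (fun x => u (Pmap q i x)) (fun x => v (Pmap q i x)) := by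
  unfold energyBil
  rw [sum_cons q (fun x y => (u x - u y) * (v x - v y)) n, Finset.mul_sum, Finset.mul_sum]
  exact Finset.sum_congr rfl fun i _ => by ring

lemma energy_eq_bil (q : Fin 3 → Pt) (n : ℕ) (u : Pt → ℝ) :
    energy q n u = energyBil q n u u := by
  unfold energy energyBil
  simp only [pow_two]

/-- The `1/5-2/5` rule (without continuity). -/
def HRule (q : Fin 3 → Pt) (h : Pt → ℝ) : Prop :=
  ∀ (m : ℕ) (ω : Fin m → Fin 3) (i j k : Fin 3), i ≠ j → j ≠ k → i ≠ k →
    h (Pw q m ω (Pmap q i (q j))) =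
      2/5 * h (Pw q m ω (q i)) + 2/5 * h (Pw q m ω (q j)) + 1/5 * h (Pw q m ω (q k))

lemma hrule_comp {q : Fin 3 → Pt} {h : Pt → ℝ} (Hh : HRule q h) (i : Fin 3) :
    HRule q (fun x => h (Pmap q i x)) := by
  intro m ω a b c hab hbc hac
  have := Hh (m+1) (Fin.cons i ω) a b c hab hbc hac
  simpa only [pw_cons] using this

lemma energyBil_zero (q : Fin 3 → Pt) (u v : Pt → ℝ) :
    energyBil q 0 u v
      = ∑ p ∈ Finset.univ.filter (fun p : Fin 3 × Fin 3 => p.1 < p.2),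
          (u (q p.1) - u (q p.2)) * (v (q p.1) - v (q p.2)) := by
  unfold energyBil
  rw [pow_zero, one_mul]
  exact Fintype.sum_unique _

/-- One-cell identity: the bilinear energy of anything against a harmonic function is
unchanged from level `0` to level `1`. -/
lemma bil_one {q : Fin 3 → Pt} {h : Pt → ℝ} (Hh : HRule q h) (u : Pt → ℝ) :
    energyBil q 1 u h = energyBil q 0 u h := by
  have r01 := Hh 0 Fin.elim0 0 1 2 (by decide) (by decide) (by decide)
  have r02 := Hh 0 Fin.elim0 0 2 1 (by decide) (by decide) (by decide)
  have r10 := Hh 0 Fin.elim0 1 0 2 (by decide) (by decide) (by decide)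
  have r12 := Hh 0 Fin.elim0 1 2 0 (by decide) (by decide) (by decide)
  have r20 := Hh 0 Fin.elim0 2 0 1 (by decide) (by decide) (by decide)
  have r21 := Hh 0 Fin.elim0 2 1 0 (by decide) (by decide) (by decide)
  simp only [pw_zero] at r01 r02 r10 r12 r20 r21
  rw [energyBil_cons, Fin.sum_univ_three]
  simp only [energyBil_zero, pairSum]
  rw [r01, r02, r10, r12, r20, r21,
    pmap_self q 0, pmap_self q 1, pmap_self q 2,
    pmap_comm q 1 0, pmap_comm q 2 0, pmap_comm q 2 1]
  ring

lemma bil_inv {q : Fin 3 → Pt} :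
    ∀ (n : ℕ) (u h : Pt → ℝ), HRule q h → energyBil q n u h = energyBil q 0 u h
  | 0, u, h, _ => rfl
  | n+1, u, h, Hh => by
    rw [energyBil_cons]
    have step : ∀ i : Fin 3,
        energyBil q n (fun x => u (Pmap q i x)) (fun x => h (Pmap q i x))
          = energyBil q 0 (fun x => u (Pmap q i x)) (fun x => h (Pmap q i x)) :=
      fun i => bil_inv n _ _ (hrule_comp Hh i)
    rw [Finset.sum_congr rfl fun i _ => step i, ← energyBil_cons q u h 0]
    exact bil_one Hh u

lemma energy_comp {q : Fin 3 → Pt} {d : Fin 3 → ℝ} {f : Pt → ℝ} {h : Fin 3 → Pt → ℝ}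
    (hrel : ∀ i, ∀ x ∈ SG q, f (Pmap q i x) = d i * f x + h i x)
    (i : Fin 3) (n : ℕ) :
    energy q n (fun x => f (Pmap q i x))
      = (d i)^2 * energy q n f + 2 * d i * energyBil q n f (h i) + energy q n (h i) := by
  unfold energy energyBil
  have key : ∀ (ω : Fin n → Fin 3) (p : Fin 3 × Fin 3),
      (f (Pmap q i (Pw q n ω (q p.1))) - f (Pmap q i (Pw q n ω (q p.2))))^2
        = (d i)^2 * (f (Pw q n ω (q p.1)) - f (Pw q n ω (q p.2)))^2
          + 2 * d i * ((f (Pw q n ω (q p.1)) - f (Pw q n ω (q p.2)))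
              * (h i (Pw q n ω (q p.1)) - h i (Pw q n ω (q p.2))))
          + (h i (Pw q n ω (q p.1)) - h i (Pw q n ω (q p.2)))^2 := by
    intro ω p
    rw [hrel i _ (mem_SG q n ω p.1), hrel i _ (mem_SG q n ω p.2)]
    ring
  calc (5/3 : ℝ)^n * ∑ ω : Fin n → Fin 3,
        ∑ p ∈ Finset.univ.filter (fun p : Fin 3 × Fin 3 => p.1 < p.2),
          (f (Pmap q i (Pw q n ω (q p.1))) - f (Pmap q i (Pw q n ω (q p.2))))^2
      = (5/3 : ℝ)^n * ∑ ω : Fin n → Fin 3,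
        ∑ p ∈ Finset.univ.filter (fun p : Fin 3 × Fin 3 => p.1 < p.2),
          ((d i)^2 * (f (Pw q n ω (q p.1)) - f (Pw q n ω (q p.2)))^2
          + 2 * d i * ((f (Pw q n ω (q p.1)) - f (Pw q n ω (q p.2)))
              * (h i (Pw q n ω (q p.1)) - h i (Pw q n ω (q p.2))))
          + (h i (Pw q n ω (q p.1)) - h i (Pw q n ω (q p.2)))^2) := by
        refine congrArg _ (Finset.sum_congr rfl fun ω _ =>
          Finset.sum_congr rfl fun p _ => key ω p)
    _ = _ := by
        simp only [Finset.sum_add_distrib, ← Finset.mul_sum]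
        ring

lemma main_step {q : Fin 3 → Pt} {d : Fin 3 → ℝ} {f : Pt → ℝ} {h : Fin 3 → Pt → ℝ}
    (hharm : ∀ i, HRule q (h i))
    (hrel : ∀ i, ∀ x ∈ SG q, f (Pmap q i x) = d i * f x + h i x) (n : ℕ) :
    energy q (n+1) f
      = (5/3) * ((d 0)^2 + (d 1)^2 + (d 2)^2) * energy q n f
        + (5/3) * ∑ i : Fin 3,
            (2 * d i * energyBil q 0 f (h i) + energy q 0 (h i)) := by
  rw [energy_cons]
  have comp : ∀ i : Fin 3, energy q n (fun x => f (Pmap q i x))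
      = (d i)^2 * energy q n f
        + (2 * d i * energyBil q 0 f (h i) + energy q 0 (h i)) := by
    intro i
    rw [energy_comp hrel i n, bil_inv n f (h i) (hharm i),
      energy_eq_bil q n (h i), bil_inv n (h i) (h i) (hharm i),
      ← energy_eq_bil q 0 (h i)]
    ring
  rw [Finset.sum_congr rfl fun i _ => comp i]
  rw [Finset.sum_add_distrib, Fin.sum_univ_three ((fun i : Fin 3 => (d i)^2 * energy q n f))]
  ring

/-- energy recursion for an FIF:
`E_m(f) = (5/3)(d₁²+d₂²+d₃²)(E_{m-1}(f) - E₀(f)) + E₁(f)` for `m ≥ 1`. -/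
theorem stmt_3 (q : Fin 3 → Pt) (hq : AffineIndependent ℝ q)
    (d : Fin 3 → ℝ) (hd : ∀ i, d i ∈ Set.Ioo (-1 : ℝ) 1)
    (f : Pt → ℝ) (hf : IsFIF q d f) :
    ∀ m : ℕ, 1 ≤ m →
      energy q m f =
        (5/3) * ((d 0)^2 + (d 1)^2 + (d 2)^2) * (energy q (m-1) f - energy q 0 f)
          + energy q 1 f := by
  obtain ⟨-, h, hharm, hrel⟩ := hf
  have hr : ∀ i, HRule q (h i) := fun i => (hharm i).2
  intro m hm
  obtain ⟨n, rfl⟩ : ∃ n, m = n + 1 := ⟨m - 1, by omega⟩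
  have h1 := main_step hr hrel n
  have h2 := main_step hr hrel 0
  simp only [Nat.add_sub_cancel]
  rw [h1, show (0:ℕ)+1 = 1 from rfl] at *
  rw [h2]
  ring

end
end

section
/- Let f be an FIF on SG with uniform vertical scaling factor d. Then for every word ω ∈ {1,2,3}^n (n ≥ 1), every nonnegative integer m, and all distinct i, j ∈ {1,2,3}, Δ_{n+m+1}f(P_ω(P_i(q_j))) = d^n · Δ_{m+1}f(P_i(q_j)). -/
open Finset Filter

noncomputable section

/-! ### Auxiliary lemmas -/

section StmtNineAux

variable {q : Fin 3 → Pt}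

lemma half_eq (x : Pt) : x / 2 = ((2:ℝ)⁻¹) • x := by
  funext t
  simp [div_eq_inv_mul]

lemma Pmap_def (i : Fin 3) (x : Pt) : Pmap q i x = ((2:ℝ)⁻¹) • (x + q i) := by
  rw [Pmap, half_eq]

lemma Pmap_inj (i : Fin 3) : Function.Injective (Pmap q i) := by
  intro x y h
  rw [Pmap_def, Pmap_def] at h
  have h2 := congrArg (fun z => (2:ℝ) • z) h
  simp only [smul_smul] at h2
  norm_num at h2
  exact h2

lemma q_mem_hull (a : Fin 3) : q a ∈ convexHull ℝ (Set.range q) :=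
  subset_convexHull ℝ _ ⟨a, rfl⟩

lemma Pmap_mem_hull (i : Fin 3) {x : Pt} (hx : x ∈ convexHull ℝ (Set.range q)) :
    Pmap q i x ∈ convexHull ℝ (Set.range q) := by
  have hc := convex_convexHull ℝ (Set.range q)
  have := hc hx (q_mem_hull i) (by norm_num : (0:ℝ) ≤ 2⁻¹) (by norm_num : (0:ℝ) ≤ 2⁻¹) (by norm_num)
  rw [Pmap_def, smul_add]
  exact this

lemma Pw_mem_hull : ∀ (m : ℕ) (σ : Fin m → Fin 3) {x : Pt},
    x ∈ convexHull ℝ (Set.range q) → Pw q m σ x ∈ convexHull ℝ (Set.range q)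
  | 0, _, _, hx => hx
  | m + 1, σ, _, hx => Pmap_mem_hull (σ 0) (Pw_mem_hull m _ hx)

lemma exists_w {x : Pt} (hx : x ∈ convexHull ℝ (Set.range q)) :
    ∃ w : Fin 3 → ℝ, (∀ p, 0 ≤ w p) ∧ (∑ p, w p) = 1 ∧ x = ∑ p, w p • q p := by
  rw [convexHull_range_eq_exists_affineCombination] at hx
  obtain ⟨s, w, hw0, hw1, hx⟩ := hx
  classical
  refine ⟨Set.indicator ↑s w, fun p => Set.indicator_apply_nonneg (fun hp => hw0 p hp), ?_, ?_⟩
  · rw [Finset.sum_indicator_subset w (Finset.subset_univ s)] at *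
    exact hw1
  · have h1 : (∑ p, Set.indicator (↑s) w p) = 1 := by
      rw [Finset.sum_indicator_subset w (Finset.subset_univ s)] at *
      exact hw1
    rw [← Finset.affineCombination_eq_linear_combination Finset.univ q _ h1,
      ← Finset.affineCombination_indicator_subset w q (Finset.subset_univ s), hx]

lemma weights_eq (hq : AffineIndependent ℝ q) {w1 w2 : Fin 3 → ℝ}
    (h1 : ∑ p, w1 p = 1) (h2 : ∑ p, w2 p = 1)
    (h : ∑ p, w1 p • q p = ∑ p, w2 p • q p) : w1 = w2 := by
  rw [← Finset.affineCombination_eq_linear_combination Finset.univ q _ h1,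
    ← Finset.affineCombination_eq_linear_combination Finset.univ q _ h2] at h
  exact (affineIndependent_iff_eq_of_fintype_affineCombination_eq ℝ q).1 hq w1 w2 h1 h2 h

lemma sum_smul_aux (w : Fin 3 → ℝ) (c : Fin 3) :
    ∑ p, ((w p + if p = c then (1:ℝ) else 0)/2) • q p
      = (2:ℝ)⁻¹ • ((∑ p, w p • q p) + q c) := by
  classical
  have key : ∀ p, ((w p + if p = c then (1:ℝ) else 0)/2) • q p
      = (2:ℝ)⁻¹ • (w p • q p) + (if p = c then (2:ℝ)⁻¹ • q p else 0) := by
    intro p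
    by_cases hp : p = c <;> simp [hp] <;> module
  rw [Finset.sum_congr rfl (fun p _ => key p), Finset.sum_add_distrib,
    Finset.sum_ite_eq' Finset.univ c, smul_add, ← Finset.smul_sum]
  simp

lemma weight_le_one {w : Fin 3 → ℝ} (h0 : ∀ p, 0 ≤ w p) (h1 : ∑ p, w p = 1) (c : Fin 3) :
    w c ≤ 1 := by
  rw [← Finset.sum_erase_add Finset.univ w (Finset.mem_univ c)] at h1
  have : 0 ≤ ∑ p ∈ Finset.univ.erase c, w p :=
    Finset.sum_nonneg fun p _ => h0 p
  linarith

lemma eq_q_of_weight_one {w : Fin 3 → ℝ} {x : Pt} (h0 : ∀ p, 0 ≤ w p)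
    (h1 : ∑ p, w p = 1) (c : Fin 3) (hc : w c = 1)
    (hx : x = ∑ p, w p • q p) : x = q c := by
  rw [← Finset.sum_erase_add Finset.univ w (Finset.mem_univ c), hc] at h1
  have h2 : ∑ p ∈ Finset.univ.erase c, w p = 0 := by linarith
  have h3 : ∀ p ∈ Finset.univ.erase c, w p = 0 :=
    (Finset.sum_eq_zero_iff_of_nonneg (fun p _ => h0 p)).1 h2
  rw [hx, ← Finset.sum_erase_add Finset.univ _ (Finset.mem_univ c), hc,
    Finset.sum_eq_zero (fun p hp => by rw [h3 p hp, zero_smul])]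
  simp

/-- Cell intersection lemma. -/
lemma cell_inter (hq : AffineIndependent ℝ q) {a b : Fin 3} (hab : a ≠ b) {u v : Pt}
    (hu : u ∈ convexHull ℝ (Set.range q)) (hv : v ∈ convexHull ℝ (Set.range q))
    (h : Pmap q a u = Pmap q b v) : u = q b ∧ v = q a := by
  classical
  obtain ⟨wu, hwu0, hwu1, hwu⟩ := exists_w hu
  obtain ⟨wv, hwv0, hwv1, hwv⟩ := exists_w hv
  set w1 : Fin 3 → ℝ := fun p => (wu p + if p = a then (1:ℝ) else 0)/2 with hw1def
  set w2 : Fin 3 → ℝ := fun p => (wv p + if p = b then (1:ℝ) else 0)/2 with hw2def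
  have hs1 : ∑ p, w1 p = 1 := by
    simp only [hw1def]
    rw [← Finset.sum_div, Finset.sum_add_distrib, hwu1, Finset.sum_ite_eq' Finset.univ a]
    norm_num
  have hs2 : ∑ p, w2 p = 1 := by
    simp only [hw2def]
    rw [← Finset.sum_div, Finset.sum_add_distrib, hwv1, Finset.sum_ite_eq' Finset.univ b]
    norm_num
  have hcomb : ∑ p, w1 p • q p = ∑ p, w2 p • q p := by
    rw [hw1def, hw2def, sum_smul_aux, sum_smul_aux, ← hwu, ← hwv]
    rw [Pmap_def, Pmap_def] at h
    exact h
  have hw := weights_eq hq hs1 hs2 hcomb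
  have ha := congrFun hw a
  have hb := congrFun hw b
  simp only [hw1def, hw2def, if_pos rfl, if_neg hab, if_neg (Ne.symm hab)] at ha hb
  have hva : wv a = 1 := by
    have h1 := hwu0 a
    have h2 := weight_le_one hwv0 hwv1 a
    have : wu a + 1 = wv a := by
      simp only [↓reduceIte, add_zero] at ha
      field_simp at ha
      linarith
    linarith
  have hub : wu b = 1 := by
    have h1 := hwv0 b
    have h2 := weight_le_one hwu0 hwu1 b
    have : wu b = wv b + 1 := by
      simp only [↓reduceIte, add_zero] at hb
      field_simp at hb
      linarith
    linarith
  exact ⟨eq_q_of_weight_one hwu0 hwu1 b hub hwu,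
    eq_q_of_weight_one hwv0 hwv1 a hva hwv⟩

/-- Corner lemma: if `P_a(u) = q_b` with `u` in the hull, then `a = b` and `u = q_b`. -/
lemma corner_lem (hq : AffineIndependent ℝ q) {a b : Fin 3} {u : Pt}
    (hu : u ∈ convexHull ℝ (Set.range q))
    (h : Pmap q a u = q b) : a = b ∧ u = q b := by
  classical
  obtain ⟨wu, hwu0, hwu1, hwu⟩ := exists_w hu
  set w1 : Fin 3 → ℝ := fun p => (wu p + if p = a then (1:ℝ) else 0)/2 with hw1def
  set w2 : Fin 3 → ℝ := fun p => if p = b then (1:ℝ) else 0 with hw2def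
  have hs1 : ∑ p, w1 p = 1 := by
    simp only [hw1def]
    rw [← Finset.sum_div, Finset.sum_add_distrib, hwu1, Finset.sum_ite_eq' Finset.univ a]
    norm_num
  have hs2 : ∑ p, w2 p = 1 := by
    simp only [hw2def]
    rw [Finset.sum_ite_eq' Finset.univ b]
    simp
  have hcomb : ∑ p, w1 p • q p = ∑ p, w2 p • q p := by
    have h2 : ∑ p, w2 p • q p = q b := by
      simp only [hw2def, ite_smul, zero_smul, one_smul]
      rw [Finset.sum_ite_eq' Finset.univ b]
      simp
    rw [hw1def, sum_smul_aux, ← hwu, h2]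
    rw [Pmap_def] at h
    rw [h]
  have hw := weights_eq hq hs1 hs2 hcomb
  have ha := congrFun hw a
  simp only [hw1def, hw2def, if_pos rfl] at ha
  by_cases hab : a = b
  · subst hab
    simp only [if_pos rfl] at ha
    have hua : wu a = 1 := by simp only [↓reduceIte, add_zero] at ha; field_simp at ha; linarith
    exact ⟨rfl, eq_q_of_weight_one hwu0 hwu1 a hua hwu⟩
  · exfalso
    simp only [if_neg hab] at ha
    have := hwu0 a
    have : wu a + 1 = 0 := by simp only [↓reduceIte, add_zero] at ha; field_simp at ha; linarith
    linarith

lemma Pmap_comm (i j : Fin 3) : Pmap q i (q j) = Pmap q j (q i) := by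
  simp [Pmap, add_comm]

/-- The midpoint is not a vertex. -/
lemma mid_ne_q (hq : AffineIndependent ℝ q) {i j : Fin 3} (hij : i ≠ j) (a : Fin 3) :
    Pmap q i (q j) ≠ q a := by
  intro h
  obtain ⟨hia, hja⟩ := corner_lem hq (q_mem_hull j) h
  exact hij (hq.injective (by rw [hja, hia]))

lemma Pmap_fix (b : Fin 3) : Pmap q b (q b) = q b := by
  funext t
  show (q b t + q b t) / 2 = q b t
  ring

lemma Pw_const_fix : ∀ (m : ℕ) (b : Fin 3), Pw q m (fun _ => b) (q b) = q b
  | 0, _ => rfl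
  | m + 1, b => by
    show Pmap q b (Pw q m (fun _ => b) (q b)) = q b
    rw [Pw_const_fix m b, Pmap_fix]

/-- Only the constant word reaches a vertex. -/
lemma Pw_eq_q (hq : AffineIndependent ℝ q) :
    ∀ (m : ℕ) (σ : Fin m → Fin 3) (p b : Fin 3),
    Pw q m σ (q p) = q b → (∀ t, σ t = b) ∧ p = b := by
  intro m
  induction m with
  | zero => exact fun σ p b h => ⟨fun t => t.elim0, hq.injective h⟩
  | succ m ih =>
    intro σ p b h
    have h0 := corner_lem hq (Pw_mem_hull m _ (q_mem_hull p)) h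
    obtain ⟨hσ0, hrest⟩ := h0
    obtain ⟨htail, hp⟩ := ih _ p b hrest
    refine ⟨fun t => ?_, hp⟩
    rcases Fin.eq_zero_or_eq_succ t with h | ⟨k, rfl⟩
    · rw [h, hσ0]
    · exact htail k

/-- Images of the midpoint never hit a vertex. -/
lemma Pw_mid_ne_q (hq : AffineIndependent ℝ q) {i j : Fin 3} (hij : i ≠ j) :
    ∀ (n : ℕ) (σ : Fin n → Fin 3) (a : Fin 3),
    Pw q n σ (Pmap q i (q j)) ≠ q a := by
  intro n
  induction n with
  | zero => exact fun σ a => mid_ne_q hq hij a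
  | succ n ih =>
    intro σ a h
    obtain ⟨_, hrest⟩ := corner_lem hq
      (Pw_mem_hull n _ (Pmap_mem_hull i (q_mem_hull j))) h
    exact ih _ a hrest

lemma Pw_cons {N : ℕ} (a : Fin 3) (τ : Fin N → Fin 3) (x : Pt) :
    Pw q (N+1) (Fin.cons a τ) x = Pmap q a (Pw q N τ x) := by
  simp only [Pw]
  have h2 : (fun k : Fin N => (Fin.cons a τ : Fin (N+1) → Fin 3) k.succ) = τ := by
    funext k; exact Fin.cons_succ (α := fun _ => Fin 3) a τ k
  rw [h2, Fin.cons_zero]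

lemma consEquiv_eq {N : ℕ} (c : Fin 3) (τ : Fin N → Fin 3) :
    (Fin.consEquiv fun _ : Fin (N+1) => Fin 3) (c, τ) = Fin.cons c τ := rfl

/-- Peeling off one letter from the graph Laplacian at an interior point. -/
lemma peel (hq : AffineIndependent ℝ q) {z : Pt}
    (hz1 : z ∈ convexHull ℝ (Set.range q)) (hz2 : ∀ a, z ≠ q a)
    (c : Fin 3) (N : ℕ) (u : Pt → ℝ) :
    graphLap q (N+1) u (Pmap q c z) = graphLap q N (fun x => u (Pmap q c x)) z := by
  classical
  rw [graphLap, graphLap]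
  rw [← Equiv.sum_comp (Fin.consEquiv (fun _ : Fin (N+1) => Fin 3))
    (fun τ => ∑ p ∈ Finset.univ.filter
      (fun p : Fin 3 × Fin 3 => p.1 ≠ p.2 ∧ Pw q (N+1) τ (q p.1) = Pmap q c z),
      (u (Pw q (N+1) τ (q p.2)) - u (Pmap q c z)))]
  rw [Fintype.sum_prod_type]
  rw [Finset.sum_eq_single_of_mem c (Finset.mem_univ c)]
  · apply Finset.sum_congr rfl
    intro τ _
    have hfilt : Finset.univ.filter
        (fun p : Fin 3 × Fin 3 => p.1 ≠ p.2 ∧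
          Pw q (N+1) ((Fin.consEquiv (fun _ : Fin (N+1) => Fin 3)) (c, τ)) (q p.1) = Pmap q c z)
        = Finset.univ.filter
        (fun p : Fin 3 × Fin 3 => p.1 ≠ p.2 ∧ Pw q N τ (q p.1) = z) := by
      ext p
      simp only [Finset.mem_filter, Finset.mem_univ, true_and, consEquiv_eq, Pw_cons]
      constructor
      · rintro ⟨h1, h2⟩
        exact ⟨h1, Pmap_inj c h2⟩
      · rintro ⟨h1, h2⟩
        exact ⟨h1, by rw [h2]⟩
    rw [hfilt]
    apply Finset.sum_congr rfl
    intro p _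
    simp only [consEquiv_eq, Pw_cons]
  · intro a _ hac
    apply Finset.sum_eq_zero
    intro τ _
    apply Finset.sum_eq_zero
    intro p hp
    exfalso
    rw [Finset.mem_filter] at hp
    obtain ⟨-, -, heq⟩ := hp
    simp only [consEquiv_eq, Pw_cons] at heq
    have := cell_inter hq hac (Pw_mem_hull N τ (q_mem_hull p.1)) hz1 heq
    exact hz2 a this.2.symm.symm

/-- The 1/5-2/5 rule, as a standalone property. -/
def Rule (q : Fin 3 → Pt) (h : Pt → ℝ) : Prop :=
  ∀ (m : ℕ) (ω : Fin m → Fin 3) (i j k : Fin 3), i ≠ j → j ≠ k → i ≠ k →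
    h (Pw q m ω (Pmap q i (q j))) =
      2/5 * h (Pw q m ω (q i)) + 2/5 * h (Pw q m ω (q j)) + 1/5 * h (Pw q m ω (q k))

lemma Rule.comp_Pmap {g : Pt → ℝ} (hg : Rule q g) (c : Fin 3) :
    Rule q (fun x => g (Pmap q c x)) := by
  intro m σ i j k h1 h2 h3
  have := hg (m+1) (Fin.cons c σ) i j k h1 h2 h3
  simpa only [Pw_cons] using this

lemma Rule.comp_Pw : ∀ (n : ℕ) (σ : Fin n → Fin 3) {g : Pt → ℝ}, Rule q g →
    Rule q (fun x => g (Pw q n σ x))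
  | 0, _, _, hg => hg
  | n+1, σ, _, hg => Rule.comp_Pw n (fun k => σ k.succ) (hg.comp_Pmap (σ 0))

/-- Boundary sum at vertex `b` over the cell with constant word `b^m`. -/
def Bnd (q : Fin 3 → Pt) (m : ℕ) (g : Pt → ℝ) (b : Fin 3) : ℝ :=
  ∑ p ∈ Finset.univ.filter (· ≠ b), (g (Pw q m (fun _ => b) (q p)) - g (q b))

lemma Bnd_succ (m : ℕ) (g : Pt → ℝ) (b : Fin 3) :
    Bnd q (m+1) g b = Bnd q m (fun x => g (Pmap q b x)) b := by
  unfold Bnd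
  apply Finset.sum_congr rfl
  intro p _
  have h1 : Pw q (m+1) (fun _ => b) (q p) = Pmap q b (Pw q m (fun _ => b) (q p)) := rfl
  simp only [h1, Pmap_fix]

lemma fin3_trich {i j : Fin 3} (hij : i ≠ j) :
    ∃ k, k ≠ i ∧ k ≠ j ∧ ∀ p : Fin 3, p = i ∨ p = j ∨ p = k := by
  have : ∀ (i j : Fin 3), i ≠ j → ∃ k, k ≠ i ∧ k ≠ j ∧ ∀ p, p = i ∨ p = j ∨ p = k := by decide
  exact this i j hij

lemma filter_ne_eq {a b c : Fin 3} (cover : ∀ p : Fin 3, p = a ∨ p = b ∨ p = c)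
    (hab : a ≠ b) (hcb : c ≠ b) (hac : a ≠ c) :
    Finset.univ.filter (· ≠ b) = ({a, c} : Finset (Fin 3)) := by
  ext p
  simp only [Finset.mem_filter, Finset.mem_univ, true_and, Finset.mem_insert,
    Finset.mem_singleton]
  constructor
  · intro hpb
    rcases cover p with h | h | h
    · exact Or.inl h
    · exact absurd h hpb
    · exact Or.inr h
  · rintro (rfl | rfl)
    · exact hab
    · exact hcb

lemma fin3_other (b : Fin 3) :
    ∃ a c, a ≠ b ∧ c ≠ b ∧ a ≠ c ∧ ∀ p : Fin 3, p = a ∨ p = b ∨ p = c := by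
  have : ∀ b : Fin 3, ∃ a c, a ≠ b ∧ c ≠ b ∧ a ≠ c ∧ ∀ p : Fin 3, p = a ∨ p = b ∨ p = c := by
    decide
  exact this b

lemma Bnd_zero_step {g : Pt → ℝ} (hg : Rule q g) (b : Fin 3) :
    Bnd q 0 (fun x => g (Pmap q b x)) b = 3/5 * Bnd q 0 g b := by
  obtain ⟨a, c, hab, hcb, hac, cover⟩ := fin3_other b
  have hfilt := filter_ne_eq cover hab hcb hac
  have r1 : g (Pmap q b (q a)) = 2/5 * g (q b) + 2/5 * g (q a) + 1/5 * g (q c) :=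
    hg 0 Fin.elim0 b a c (Ne.symm hab) hac (Ne.symm hcb)
  have r2 : g (Pmap q b (q c)) = 2/5 * g (q b) + 2/5 * g (q c) + 1/5 * g (q a) :=
    hg 0 Fin.elim0 b c a (Ne.symm hcb) (Ne.symm hac) (Ne.symm hab)
  have e1 : Bnd q 0 (fun x => g (Pmap q b x)) b
      = (g (Pmap q b (q a)) - g (q b)) + (g (Pmap q b (q c)) - g (q b)) := by
    unfold Bnd
    rw [hfilt, Finset.sum_pair hac]
    simp only [Pw, Pmap_fix]
  have e2 : Bnd q 0 g b = (g (q a) - g (q b)) + (g (q c) - g (q b)) := by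
    unfold Bnd
    rw [hfilt, Finset.sum_pair hac]
    simp only [Pw]
  rw [e1, e2, r1, r2]
  ring

lemma Bnd_scale : ∀ (m : ℕ) {g : Pt → ℝ}, Rule q g → ∀ b,
    Bnd q m g b = (3/5)^m * Bnd q 0 g b
  | 0, g, _, b => by norm_num
  | m+1, g, hg, b => by
    rw [Bnd_succ, Bnd_scale m (hg.comp_Pmap b) b, Bnd_zero_step hg b, pow_succ]
    ring

lemma Bnd_cross {g : Pt → ℝ} (hg : Rule q g) {i j : Fin 3} (hij : i ≠ j) :
    Bnd q 0 (fun x => g (Pmap q i x)) j + Bnd q 0 (fun x => g (Pmap q j x)) i = 0 := by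
  obtain ⟨k, hki, hkj, cover⟩ := fin3_trich hij
  have hfj : Finset.univ.filter (· ≠ j) = ({i, k} : Finset (Fin 3)) :=
    filter_ne_eq cover hij hkj (Ne.symm hki)
  have cover' : ∀ p : Fin 3, p = j ∨ p = i ∨ p = k := by
    intro p; rcases cover p with h | h | h
    · exact Or.inr (Or.inl h)
    · exact Or.inl h
    · exact Or.inr (Or.inr h)
  have hfi : Finset.univ.filter (· ≠ i) = ({j, k} : Finset (Fin 3)) :=
    filter_ne_eq cover' (Ne.symm hij) hki (fun h => hkj h.symm)
  have r1 : g (Pmap q i (q j)) = 2/5 * g (q i) + 2/5 * g (q j) + 1/5 * g (q k) :=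
    hg 0 Fin.elim0 i j k hij (Ne.symm hkj) (Ne.symm hki)
  have r2 : g (Pmap q i (q k)) = 2/5 * g (q i) + 2/5 * g (q k) + 1/5 * g (q j) :=
    hg 0 Fin.elim0 i k j (Ne.symm hki) hkj hij
  have r3 : g (Pmap q j (q k)) = 2/5 * g (q j) + 2/5 * g (q k) + 1/5 * g (q i) :=
    hg 0 Fin.elim0 j k i (Ne.symm hkj) hki (Ne.symm hij)
  have e1 : Bnd q 0 (fun x => g (Pmap q i x)) j
      = (g (Pmap q i (q i)) - g (Pmap q i (q j)))
        + (g (Pmap q i (q k)) - g (Pmap q i (q j))) := by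
    unfold Bnd
    rw [hfj, Finset.sum_pair (Ne.symm hki)]
    simp only [Pw]
  have e2 : Bnd q 0 (fun x => g (Pmap q j x)) i
      = (g (Pmap q j (q j)) - g (Pmap q j (q i)))
        + (g (Pmap q j (q k)) - g (Pmap q j (q i))) := by
    unfold Bnd
    rw [hfi, Finset.sum_pair (fun h => hkj h.symm)]
    simp only [Pw]
  have hcomm : g (Pmap q j (q i)) = g (Pmap q i (q j)) := by rw [Pmap_comm]
  rw [e1, e2, Pmap_fix, Pmap_fix, hcomm, r1, r2, r3]
  ring

lemma word_mid (hq : AffineIndependent ℝ q) {i j : Fin 3} (hij : i ≠ j) (m : ℕ)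
    (τ : Fin (m+1) → Fin 3) (p : Fin 3) :
    Pw q (m+1) τ (q p) = Pmap q i (q j) ↔
      (τ = Fin.cons i (fun _ => j) ∧ p = j) ∨ (τ = Fin.cons j (fun _ => i) ∧ p = i) := by
  constructor
  · intro h
    have hunf : Pw q (m+1) τ (q p) = Pmap q (τ 0) (Pw q m (fun k => τ k.succ) (q p)) := rfl
    rw [hunf] at h
    have hu : Pw q m (fun k => τ k.succ) (q p) ∈ convexHull ℝ (Set.range q) :=
      Pw_mem_hull m _ (q_mem_hull p)
    by_cases h0i : τ 0 = i
    · left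
      rw [h0i] at h
      have := Pmap_inj i h
      obtain ⟨htail, hp⟩ := Pw_eq_q hq m _ p j this
      refine ⟨?_, hp⟩
      funext t
      rcases Fin.eq_zero_or_eq_succ t with rfl | ⟨k, rfl⟩
      · rw [h0i]; exact (Fin.cons_zero (α := fun _ : Fin (m+1) => Fin 3) i (fun _ => j)).symm
      · rw [htail k]
        exact (Fin.cons_succ (α := fun _ : Fin (m+1) => Fin 3) i (fun _ => j) k).symm
    · by_cases h0j : τ 0 = j
      · right
        rw [h0j, Pmap_comm i j] at h
        have := Pmap_inj j h
        obtain ⟨htail, hp⟩ := Pw_eq_q hq m _ p i this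
        refine ⟨?_, hp⟩
        funext t
        rcases Fin.eq_zero_or_eq_succ t with rfl | ⟨k, rfl⟩
        · rw [h0j]; exact (Fin.cons_zero (α := fun _ : Fin (m+1) => Fin 3) j (fun _ => i)).symm
        · rw [htail k]
          exact (Fin.cons_succ (α := fun _ : Fin (m+1) => Fin 3) j (fun _ => i) k).symm
      · exfalso
        have := cell_inter hq h0i hu (q_mem_hull j) h
        exact h0j (hq.injective this.2).symm
  · rintro (⟨rfl, rfl⟩ | ⟨rfl, rfl⟩)
    · rw [Pw_cons, Pw_const_fix]
    · rw [Pw_cons, Pw_const_fix, Pmap_comm]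

/-- Enumeration of the level-(m+1) Laplacian at the midpoint `P_i(q_j)`. -/
lemma lap_eq_Bnd (hq : AffineIndependent ℝ q) {i j : Fin 3} (hij : i ≠ j) (m : ℕ)
    (g : Pt → ℝ) :
    graphLap q (m+1) g (Pmap q i (q j)) =
      Bnd q m (fun x => g (Pmap q i x)) j + Bnd q m (fun x => g (Pmap q j x)) i := by
  classical
  set y := Pmap q i (q j) with hy
  set A : Fin (m+1) → Fin 3 := Fin.cons i (fun _ => j) with hA
  set B : Fin (m+1) → Fin 3 := Fin.cons j (fun _ => i) with hB
  have hAB : A ≠ B := by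
    intro h
    have := congrFun h 0
    rw [hA, hB, Fin.cons_zero, Fin.cons_zero] at this
    exact hij this
  rw [graphLap]
  rw [← Finset.sum_subset (Finset.subset_univ ({A, B} : Finset (Fin (m+1) → Fin 3)))]
  · rw [Finset.sum_pair hAB]
    have hfA : Finset.univ.filter
        (fun p : Fin 3 × Fin 3 => p.1 ≠ p.2 ∧ Pw q (m+1) A (q p.1) = y) =
        ({j} : Finset (Fin 3)) ×ˢ (Finset.univ.filter (· ≠ j)) := by
      ext p
      simp only [Finset.mem_filter, Finset.mem_univ, true_and, Finset.mem_product,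
        Finset.mem_singleton]
      constructor
      · rintro ⟨hne, heq⟩
        rcases (word_mid hq hij m A p.1).1 heq with ⟨-, h1⟩ | ⟨hab, -⟩
        · exact ⟨h1, by rw [h1] at hne; exact fun hh => hne hh.symm⟩
        · exact absurd hab hAB
      · rintro ⟨h1, h2⟩
        exact ⟨by rw [h1]; exact fun hh => h2 hh.symm,
          (word_mid hq hij m A p.1).2 (Or.inl ⟨rfl, h1⟩)⟩
    have hfB : Finset.univ.filter
        (fun p : Fin 3 × Fin 3 => p.1 ≠ p.2 ∧ Pw q (m+1) B (q p.1) = y) =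
        ({i} : Finset (Fin 3)) ×ˢ (Finset.univ.filter (· ≠ i)) := by
      ext p
      simp only [Finset.mem_filter, Finset.mem_univ, true_and, Finset.mem_product,
        Finset.mem_singleton]
      constructor
      · rintro ⟨hne, heq⟩
        rcases (word_mid hq hij m B p.1).1 heq with ⟨hab, -⟩ | ⟨-, h1⟩
        · exact absurd hab.symm hAB
        · exact ⟨h1, by rw [h1] at hne; exact fun hh => hne hh.symm⟩
      · rintro ⟨h1, h2⟩
        exact ⟨by rw [h1]; exact fun hh => h2 hh.symm,
          (word_mid hq hij m B p.1).2 (Or.inr ⟨rfl, h1⟩)⟩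
    rw [hfA, hfB, Finset.sum_product, Finset.sum_product, Finset.sum_singleton,
      Finset.sum_singleton]
    refine congrArg₂ (· + ·) ?_ ?_
    · unfold Bnd
      simp only [hA, hy, Pw_cons]
    · unfold Bnd
      simp only [hB, hy, Pw_cons, Pmap_comm i j]
  · intro τ _ hτ
    apply Finset.sum_eq_zero
    intro p hp
    exfalso
    rw [Finset.mem_filter] at hp
    rcases (word_mid hq hij m τ p.1).1 hp.2.2 with ⟨h1, -⟩ | ⟨h1, -⟩
    · exact hτ (by rw [h1]; exact Finset.mem_insert_self _ _)
    · exact hτ (by rw [h1]; exact Finset.mem_insert_of_mem (Finset.mem_singleton_self _))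

/-- The graph Laplacian of a function satisfying the 1/5-2/5 rule vanishes at midpoints. -/
lemma lap_zero (hq : AffineIndependent ℝ q) {g : Pt → ℝ} (hg : Rule q g)
    {i j : Fin 3} (hij : i ≠ j) (m : ℕ) :
    graphLap q (m+1) g (Pmap q i (q j)) = 0 := by
  rw [lap_eq_Bnd hq hij m g,
    Bnd_scale m (hg.comp_Pmap i) j, Bnd_scale m (hg.comp_Pmap j) i,
    ← mul_add, Bnd_cross hg hij, mul_zero]

/-- Linearity of the graph Laplacian. -/
lemma graphLap_lin (c : ℝ) (u v w : Pt → ℝ) (m : ℕ) (x : Pt)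
    (hw : ∀ (τ : Fin m → Fin 3) (p : Fin 3),
      w (Pw q m τ (q p)) = c * u (Pw q m τ (q p)) + v (Pw q m τ (q p)))
    (hx : w x = c * u x + v x) :
    graphLap q m w x = c * graphLap q m u x + graphLap q m v x := by
  rw [graphLap, graphLap, graphLap, Finset.mul_sum, ← Finset.sum_add_distrib]
  apply Finset.sum_congr rfl
  intro τ _
  rw [Finset.mul_sum, ← Finset.sum_add_distrib]
  apply Finset.sum_congr rfl
  intro p _
  rw [hw τ p.2, hx]
  ring

lemma q_mem_Vstar (p : Fin 3) : q p ∈ Vstar q :=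
  Set.mem_iUnion.2 ⟨0, ⟨Fin.elim0, p, rfl⟩⟩

lemma Vstar_Pmap (c : Fin 3) {x : Pt} (hx : x ∈ Vstar q) : Pmap q c x ∈ Vstar q := by
  obtain ⟨s, ⟨m, rfl⟩, σ, p, rfl⟩ := hx
  exact Set.mem_iUnion.2 ⟨m+1, ⟨Fin.cons c σ, p, (Pw_cons c σ (q p)).symm⟩⟩

lemma Vstar_Pw : ∀ (n : ℕ) (σ : Fin n → Fin 3) {x : Pt},
    x ∈ Vstar q → Pw q n σ x ∈ Vstar q
  | 0, _, _, hx => hx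
  | n+1, σ, _, hx => Vstar_Pmap (σ 0) (Vstar_Pw n _ hx)

lemma Vstar_subset_SG : Vstar q ⊆ SG q := subset_closure

end StmtNineAux

/-- scaling of the graph Laplacian of an FIF under composition with
`P_ω`: `Δ_{n+m+1} f (P_ω(P_i(q_j))) = d^n Δ_{m+1} f (P_i(q_j))`. -/
theorem stmt_9 (q : Fin 3 → Pt) (hq : AffineIndependent ℝ q)
    (d : ℝ) (hd : d ∈ Set.Ioo (-1 : ℝ) 1)
    (f : Pt → ℝ) (hf : IsFIF q (fun _ => d) f)
    (n : ℕ) (hn : 1 ≤ n) (ω : Fin n → Fin 3) (m : ℕ)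
    (i j : Fin 3) (hij : i ≠ j) :
    graphLap q (n+m+1) f (Pw q n ω (Pmap q i (q j))) =
      d^n * graphLap q (m+1) f (Pmap q i (q j)) := by
  obtain ⟨-, h, hharm, hfif⟩ := hf
  have claim1 : ∀ (N : ℕ) (σ : Fin N → Fin 3) (u : Pt → ℝ),
      graphLap q (N+(m+1)) u (Pw q N σ (Pmap q i (q j))) =
        graphLap q (m+1) (fun x => u (Pw q N σ x)) (Pmap q i (q j)) := by
    intro N
    induction N with
    | zero =>
      intro σ u
      simp only [Nat.zero_add]
      rfl
    | succ N ih =>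
      intro σ u
      rw [show Pw q (N+1) σ (Pmap q i (q j))
          = Pmap q (σ 0) (Pw q N (fun k => σ k.succ) (Pmap q i (q j))) from rfl]
      rw [show (N+1)+(m+1) = ((N+1)+m)+1 from rfl]
      rw [peel hq (Pw_mem_hull N _ (Pmap_mem_hull i (q_mem_hull j)))
        (fun a => Pw_mid_ne_q hq hij N _ a) (σ 0) ((N+1)+m) u]
      rw [show (N+1)+m = N+(m+1) from by omega]
      exact (ih (fun k => σ k.succ) (fun x => u (Pmap q (σ 0) x))).trans rfl
  have claim2 : ∀ (N : ℕ) (σ : Fin N → Fin 3),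
      graphLap q (m+1) (fun x => f (Pw q N σ x)) (Pmap q i (q j)) =
        d^N * graphLap q (m+1) f (Pmap q i (q j)) := by
    intro N
    induction N with
    | zero =>
      intro σ
      simp only [pow_zero, one_mul]
      rfl
    | succ N ih =>
      intro σ
      have hmemy : Pw q N (fun k => σ k.succ) (Pmap q i (q j)) ∈ SG q :=
        Vstar_subset_SG (Vstar_Pw N _ (Vstar_Pmap i (q_mem_Vstar j)))
      have hw : ∀ (τ : Fin (m+1) → Fin 3) (p : Fin 3),
          (fun x => f (Pw q (N+1) σ x)) (Pw q (m+1) τ (q p)) =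
            d * (fun x => f (Pw q N (fun k => σ k.succ) x)) (Pw q (m+1) τ (q p)) +
              (fun x => h (σ 0) (Pw q N (fun k => σ k.succ) x)) (Pw q (m+1) τ (q p)) := by
        intro τ p
        exact hfif (σ 0) (Pw q N (fun k => σ k.succ) (Pw q (m+1) τ (q p)))
          (Vstar_subset_SG (Vstar_Pw N _ (Vstar_Pw (m+1) τ (q_mem_Vstar p))))
      have hx : (fun x => f (Pw q (N+1) σ x)) (Pmap q i (q j)) =
          d * (fun x => f (Pw q N (fun k => σ k.succ) x)) (Pmap q i (q j)) +
            (fun x => h (σ 0) (Pw q N (fun k => σ k.succ) x)) (Pmap q i (q j)) :=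
        hfif (σ 0) (Pw q N (fun k => σ k.succ) (Pmap q i (q j))) hmemy
      rw [graphLap_lin d (fun x => f (Pw q N (fun k => σ k.succ) x))
        (fun x => h (σ 0) (Pw q N (fun k => σ k.succ) x))
        (fun x => f (Pw q (N+1) σ x)) (m+1) (Pmap q i (q j)) hw hx]
      rw [ih (fun k => σ k.succ)]
      rw [lap_zero hq (Rule.comp_Pw N (fun k => σ k.succ) (hharm (σ 0)).2) hij m]
      rw [pow_succ]
      ring
  exact (claim1 n ω f).trans (claim2 n ω)

end
end
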